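/- Let E be a finite set. The mapping ν_E restricts to a bijection between the set of graphic Lagrangian subspaces of V_E and the set of nondegeneracy set systems of symmetric E×E matrices over 𝔽₂ (i.e. nondegeneracy delta-matroids of framed graphs on the vertex set E): every graphic Lagrangian L satisfies ν_E(L) = (E; Φ(A)) for a unique symmetric matrix A, and every set system (E; Φ(A)) arises in this way from a unique graphic Lagrangian subspace. -/

import Mathlib

open Finset
open scoped symmDiff

variable {E : Type*} [Fintype E] [DecidableEq E]

/-- The symplectic vector space `V_E = (E → 𝔽₂) × (E → 𝔽₂)`. -/
abbrev V (E : Type*) : Type _ := (E → ZMod 2) × (E → ZMod 2)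

/-- Basis vector `e`. -/
def baseV (e : E) : V E := (Pi.single e 1, 0)

/-- Basis vector `e^∨`. -/
def dualV (e : E) : V E := (0, Pi.single e 1)

/-- The symplectic form on `V E`. -/
def omegaForm (u v : V E) : ZMod 2 := ∑ e, (u.1 e * v.2 e + u.2 e * v.1 e)

/-- A subspace is Lagrangian if the form vanishes on it and its dimension is `|E|`. -/
def IsLagrangian (L : Submodule (ZMod 2) (V E)) : Prop :=
  (∀ u ∈ L, ∀ v ∈ L, omegaForm u v = 0) ∧
    Module.finrank (ZMod 2) L = Fintype.card E

/-- The span of `{e^∨ : e ∈ Y} ∪ {e : e ∈ E \ Y}`. -/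
def coordSpan (Y : Finset E) : Submodule (ZMod 2) (V E) :=
  Submodule.span (ZMod 2)
    ((fun e => dualV e) '' (Y : Set E) ∪ (fun e => baseV e) '' ((Yᶜ : Finset E) : Set E))

/-- `Y` is feasible for `L` iff `L ∩ ⟨Y^∨ ⊔ (E \ Y)⟩ = 0`. -/
def Feasible (L : Submodule (ZMod 2) (V E)) (Y : Finset E) : Prop :=
  L ⊓ coordSpan Y = ⊥

/-- The set system `ν_E(L)`. -/
def nu (L : Submodule (ZMod 2) (V E)) : Set (Finset E) := {Y | Feasible L Y}

/-- The nondegeneracy set system of a matrix `A`. -/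
def Phi (A : Matrix E E (ZMod 2)) : Set (Finset E) :=
  {U : Finset E | IsUnit (A.submatrix (fun i : ↥U => (i : E)) (fun j : ↥U => (j : E))).det}

/-- The symmetric exchange axiom. -/
def SEAxiom (Φ : Set (Finset E)) : Prop :=
  ∀ φ₁ ∈ Φ, ∀ φ₂ ∈ Φ, ∀ e ∈ φ₁ ∆ φ₂, ∃ e' ∈ φ₁ ∆ φ₂, φ₁ ∆ ({e, e'} : Finset E) ∈ Φ

/-- Binary delta-matroid: a twist of a nondegeneracy set system. -/
def IsBinaryDM (Φ : Set (Finset E)) : Prop :=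
  ∃ (A : Matrix E E (ZMod 2)) (E' : Finset E), A.IsSymm ∧ Φ = (· ∆ E') '' Phi A

/-- The involution `σ_e` swapping `e` and `e^∨`. -/
def sigmaE (e : E) : V E →ₗ[ZMod 2] V E where
  toFun u := (fun f => if f = e then u.2 f else u.1 f, fun f => if f = e then u.1 f else u.2 f)
  map_add' u v := by ext f <;> dsimp <;> split <;> rfl
  map_smul' c u := by ext f <;> dsimp <;> split <;> rfl

/-- Composition of the `σ_e` over `e ∈ E'`. -/
def sigmaSet (E' : Finset E) : V E →ₗ[ZMod 2] V E where
  toFun u := (fun f => if f ∈ E' then u.2 f else u.1 f, fun f => if f ∈ E' then u.1 f else u.2 f)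
  map_add' u v := by ext f <;> dsimp <;> split <;> rfl
  map_smul' c u := by ext f <;> dsimp <;> split <;> rfl

/-- A Lagrangian subspace is graphic if for every `e` there is `v_e ∈ L` with
`ω(v_e,e)=1` and `ω(v_e,e')=0` for `e' ≠ e`. -/
def IsGraphic (L : Submodule (ZMod 2) (V E)) : Prop :=
  ∀ e : E, ∃ v ∈ L, omegaForm v (baseV e) = 1 ∧
    ∀ e' : E, e' ≠ e → omegaForm v (baseV e') = 0

/-- The vector `e^∨ + Σ_{e'} A_{e,e'} e'`. -/
def rowVec (A : Matrix E E (ZMod 2)) (e : E) : V E := (A e, Pi.single e 1)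

/-- The subspace spanned by the vectors `rowVec A e`, `e ∈ E`. -/
def graphOf (A : Matrix E E (ZMod 2)) : Submodule (ZMod 2) (V E) :=
  Submodule.span (ZMod 2) (Set.range (rowVec A))

/-- The first Vassiliev move: `e^∨ ↦ e^∨ + e'`, `e'^∨ ↦ e'^∨ + e`, fixing other basis vectors. -/
def vassiliev1 (e e' : E) : V E →ₗ[ZMod 2] V E where
  toFun u := (fun f => u.1 f + (if f = e' then u.2 e else 0) + (if f = e then u.2 e' else 0), u.2)
  map_add' u v := by ext f <;> dsimp <;> split_ifs <;> ring
  map_smul' c u := by ext f <;> dsimp <;> split_ifs <;> ring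

open Matrix

section Helpers

lemma omega_baseV (v : V E) (e : E) : omegaForm v (baseV e) = v.2 e := by
  simp [omegaForm, baseV, Pi.single_apply, mul_ite, Finset.sum_ite_eq']

lemma sum_comp1 (c : E → ZMod 2) (A : Matrix E E (ZMod 2)) (f : E) :
    (∑ i, c i • rowVec A i).1 f = ∑ e, c e * A e f := by
  simp [Prod.fst_sum, rowVec, Finset.sum_apply, smul_eq_mul]

lemma sum_comp2 (c : E → ZMod 2) (A : Matrix E E (ZMod 2)) (g : E) :
    (∑ i, c i • rowVec A i).2 g = c g := by
  simp [Prod.snd_sum, rowVec, Finset.sum_apply, Pi.single_apply, mul_ite,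
    smul_eq_mul, Finset.sum_ite_eq']

lemma mem_graphOf {A : Matrix E E (ZMod 2)} {v : V E} :
    v ∈ graphOf A ↔ ∀ f, v.1 f = ∑ e, v.2 e * A e f := by
  rw [graphOf, Submodule.mem_span_range_iff_exists_fun]
  constructor
  · rintro ⟨c, rfl⟩ f
    rw [sum_comp1]
    exact Finset.sum_congr rfl fun e _ => by rw [sum_comp2]
  · intro h
    refine ⟨v.2, ?_⟩
    ext f
    · rw [sum_comp1, ← h f]
    · rw [sum_comp2]

lemma rowVec_li (A : Matrix E E (ZMod 2)) : LinearIndependent (ZMod 2) (rowVec A) := by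
  have h : LinearIndependent (ZMod 2) (fun e : E => Pi.single e (1 : ZMod 2)) := by
    have := (Pi.basisFun (ZMod 2) E).linearIndependent
    rwa [show ⇑(Pi.basisFun (ZMod 2) E) = fun e => Pi.single e 1 from
      funext fun e => Pi.basisFun_apply (ZMod 2) E e] at this
  refine LinearIndependent.of_comp (LinearMap.snd (ZMod 2) (E → ZMod 2) (E → ZMod 2)) ?_
  simpa [rowVec, Function.comp_def] using h

lemma finrank_graphOf (A : Matrix E E (ZMod 2)) :
    Module.finrank (ZMod 2) (graphOf A) = Fintype.card E :=
  finrank_span_eq_card (rowVec_li A)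

lemma omega_rowVec (A : Matrix E E (ZMod 2)) (e f : E) :
    omegaForm (rowVec A e) (rowVec A f) = A e f + A f e := by
  simp [omegaForm, rowVec, Pi.single_apply, mul_ite, ite_mul, Finset.sum_add_distrib,
    Finset.sum_ite_eq', Finset.sum_ite_eq]

lemma graphOf_isLagrangian {A : Matrix E E (ZMod 2)} (hA : A.IsSymm) :
    IsLagrangian (graphOf A) := by
  constructor
  · intro u hu v hv
    rw [mem_graphOf] at hu hv
    simp only [omegaForm, hu, hv, Finset.sum_mul, Finset.mul_sum]
    rw [Finset.sum_add_distrib]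
    have hc : ∑ f, ∑ e, u.2 f * (v.2 e * A e f) = ∑ a, ∑ b, u.2 b * A b a * v.2 a := by
      rw [Finset.sum_comm]
      exact Finset.sum_congr rfl fun a _ => Finset.sum_congr rfl fun b _ => by
        rw [show A a b = A b a from hA.apply b a]; ring
    rw [hc, CharTwo.add_self_eq_zero]
  · exact finrank_graphOf A

lemma graphOf_isGraphic (A : Matrix E E (ZMod 2)) : IsGraphic (graphOf A) := by
  intro e
  refine ⟨rowVec A e, Submodule.subset_span ⟨e, rfl⟩, ?_, ?_⟩
  · rw [omega_baseV]; simp [rowVec]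
  · intro e' he'
    rw [omega_baseV]
    simp [rowVec, Pi.single_apply, he'.symm]

lemma exists_graphOf {L : Submodule (ZMod 2) (V E)} (hL : IsLagrangian L)
    (hG : IsGraphic L) : ∃ A : Matrix E E (ZMod 2), A.IsSymm ∧ L = graphOf A := by
  choose v hv h1 h0 using hG
  have hv2 : ∀ e, (v e).2 = Pi.single e 1 := by
    intro e
    funext f
    rcases eq_or_ne f e with rfl | hf
    · rw [← omega_baseV, h1 _, Pi.single_eq_same]
    · rw [← omega_baseV, h0 _ _ hf, Pi.single_eq_of_ne hf]
  set A : Matrix E E (ZMod 2) := Matrix.of (fun e => (v e).1) with hAdef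
  have hrow : ∀ e, rowVec A e = v e := fun e =>
    Prod.ext rfl (hv2 e).symm
  have homega : ∀ e f, omegaForm (v e) (v f) = A e f + A f e := fun e f => by
    rw [← hrow e, ← hrow f, omega_rowVec]
  have hsymm : A.IsSymm := Matrix.IsSymm.ext fun f e => by
    have h := hL.1 (v e) (hv e) (v f) (hv f)
    rw [homega] at h
    rwa [CharTwo.add_eq_iff_eq_add, zero_add] at h
  have hle : graphOf A ≤ L := by
    rw [graphOf, Submodule.span_le]
    rintro _ ⟨e, rfl⟩
    rw [hrow e]; exact hv e
  refine ⟨A, hsymm, ?_⟩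
  have := Submodule.eq_of_le_of_finrank_eq hle ?_
  · exact this.symm
  · rw [finrank_graphOf, hL.2]

lemma mem_coordSpan {Y : Finset E} {v : V E} :
    v ∈ coordSpan Y ↔ (∀ f ∈ Y, v.1 f = 0) ∧ (∀ f ∉ Y, v.2 f = 0) := by
  constructor
  · intro h
    induction h using Submodule.span_induction with
    | mem x hx =>
      rcases hx with ⟨e, he, rfl⟩ | ⟨e, he, rfl⟩
      · exact ⟨fun f _ => rfl, fun f hf => Pi.single_eq_of_ne (by
          rintro rfl; exact hf he) 1⟩
      · simp only [Finset.coe_compl, Set.mem_compl_iff, Finset.mem_coe] at he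
        exact ⟨fun f hf => Pi.single_eq_of_ne (by rintro rfl; exact he hf) 1,
          fun f _ => rfl⟩
    | zero => exact ⟨fun f _ => rfl, fun f _ => rfl⟩
    | add x y _ _ hx hy =>
      exact ⟨fun f hf => by
          show x.1 f + y.1 f = 0
          rw [hx.1 f hf, hy.1 f hf, add_zero],
        fun f hf => by
          show x.2 f + y.2 f = 0
          rw [hx.2 f hf, hy.2 f hf, add_zero]⟩
    | smul c x _ hx =>
      exact ⟨fun f hf => by
          show c * x.1 f = 0
          rw [hx.1 f hf, mul_zero],
        fun f hf => by
          show c * x.2 f = 0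
          rw [hx.2 f hf, mul_zero]⟩
  · rintro ⟨h1, h2⟩
    have : v = (∑ f ∈ Yᶜ, v.1 f • baseV f) + ∑ f ∈ Y, v.2 f • dualV f := by
      ext g
      · show v.1 g = (_ + _)
        have ha : ((∑ f ∈ Yᶜ, v.1 f • baseV f) : V E).1 g = ∑ f ∈ Yᶜ, v.1 f * (Pi.single f 1 : E → ZMod 2) g := by
          rw [Prod.fst_sum]; simp [baseV]
        have hb : ((∑ f ∈ Y, v.2 f • dualV f) : V E).1 g = 0 := by
          rw [Prod.fst_sum]; simp [dualV]
        show v.1 g = ((∑ f ∈ Yᶜ, v.1 f • baseV f) : V E).1 g + ((∑ f ∈ Y, v.2 f • dualV f) : V E).1 g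
        rw [ha, hb, add_zero]
        simp only [Pi.single_apply, mul_ite, mul_one, mul_zero]
        rw [Finset.sum_ite_eq Yᶜ g v.1]
        by_cases hg : g ∈ Y
        · simp [hg, h1 g hg]
        · simp [hg]
      · show v.2 g = _
        have ha : ((∑ f ∈ Yᶜ, v.1 f • baseV f) : V E).2 g = 0 := by
          rw [Prod.snd_sum]; simp [baseV]
        have hb : ((∑ f ∈ Y, v.2 f • dualV f) : V E).2 g = ∑ f ∈ Y, v.2 f * (Pi.single f 1 : E → ZMod 2) g := by
          rw [Prod.snd_sum]; simp [dualV]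
        show v.2 g = ((∑ f ∈ Yᶜ, v.1 f • baseV f) : V E).2 g + ((∑ f ∈ Y, v.2 f • dualV f) : V E).2 g
        rw [ha, hb, zero_add]
        simp only [Pi.single_apply, mul_ite, mul_one, mul_zero]
        rw [Finset.sum_ite_eq Y g v.2]
        by_cases hg : g ∈ Y
        · simp [hg]
        · simp [hg, h2 g hg]
    rw [this]
    refine Submodule.add_mem _ (Submodule.sum_mem _ fun f hf => Submodule.smul_mem _ _ ?_)
      (Submodule.sum_mem _ fun f hf => Submodule.smul_mem _ _ ?_)
    · exact Submodule.subset_span (Or.inr ⟨f, by simpa using hf, rfl⟩)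
    · exact Submodule.subset_span (Or.inl ⟨f, by simpa using hf, rfl⟩)

lemma nu_graphOf (A : Matrix E E (ZMod 2)) : nu (graphOf A) = Phi A := by
  ext Y
  set M : Matrix ↥Y ↥Y (ZMod 2) :=
    A.submatrix (fun i : ↥Y => (i : E)) (fun j : ↥Y => (j : E)) with hM
  constructor
  · -- feasible → IsUnit det
    intro hfeas
    by_contra hdet
    have hdet0 : M.det = 0 := by
      by_contra h0; exact hdet (isUnit_iff_ne_zero.2 h0)
    have : Mᵀ.det = 0 := by rw [Matrix.det_transpose]; exact hdet0
    obtain ⟨w, hw0, hw⟩ := (Matrix.exists_mulVec_eq_zero_iff).2 this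
    set c : E → ZMod 2 := fun e => if h : e ∈ Y then w ⟨e, h⟩ else 0 with hc
    set vv : V E := (fun f => ∑ e, c e * A e f, c) with hvv
    have hmem1 : vv ∈ graphOf A := mem_graphOf.2 fun f => rfl
    have hmem2 : vv ∈ coordSpan Y := by
      rw [mem_coordSpan]
      constructor
      · intro f hf
        show (∑ e, c e * A e f) = 0
        have hs : ∑ e, c e * A e f = ∑ e ∈ Y, c e * A e f := by
          refine (Finset.sum_subset (Finset.subset_univ Y) fun e _ he => ?_).symm
          simp [hc, he]
        rw [hs, ← Finset.sum_coe_sort Y (fun e => c e * A e f)]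
        have : ∀ j : ↥Y, c (j : E) * A (j : E) f = Mᵀ ⟨f, hf⟩ j * w j := by
          intro j
          simp [hc, j.2, hM, Matrix.transpose_apply, Matrix.submatrix_apply, mul_comm]
        rw [Finset.sum_congr rfl fun j _ => this j]
        have := congrFun hw ⟨f, hf⟩
        simpa [Matrix.mulVec, dotProduct] using this
      · intro f hf
        show c f = 0
        simp [hc, hf]
    have : vv = 0 := by
      have : vv ∈ graphOf A ⊓ coordSpan Y := ⟨hmem1, hmem2⟩
      rw [hfeas] at this
      simpa using this
    apply hw0
    funext j
    have := congrFun (congrArg Prod.snd this) (j : E)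
    simpa [hvv, hc, j.2] using this
  · -- IsUnit det → feasible
    intro hdet
    show Feasible (graphOf A) Y
    rw [Feasible, Submodule.eq_bot_iff]
    rintro v ⟨hv1, hv2⟩
    rw [SetLike.mem_coe, mem_graphOf] at hv1
    rw [SetLike.mem_coe, mem_coordSpan] at hv2
    set w : ↥Y → ZMod 2 := fun j => v.2 (j : E) with hwdef
    have hMw : Mᵀ.mulVec w = 0 := by
      funext i
      show ∑ j, Mᵀ i j * w j = 0
      have h1 : ∑ j : ↥Y, Mᵀ i j * w j = ∑ e ∈ Y, v.2 e * A e (i : E) := by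
        rw [← Finset.sum_coe_sort Y (fun e => v.2 e * A e (i : E))]
        exact Finset.sum_congr rfl fun j _ => by
          simp [hM, hwdef, Matrix.transpose_apply, Matrix.submatrix_apply, mul_comm]
      have h2 : ∑ e ∈ Y, v.2 e * A e (i : E) = ∑ e, v.2 e * A e (i : E) := by
        refine Finset.sum_subset (Finset.subset_univ Y) fun e _ he => ?_
        rw [hv2.2 e he, zero_mul]
      rw [h1, h2, ← hv1 (i : E), hv2.1 _ i.2]
    have hw : w = 0 := by
      have hinj : Function.Injective (Mᵀ.mulVec) :=
        Matrix.mulVec_injective_iff_isUnit.2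
          ((Matrix.isUnit_iff_isUnit_det _).2 (by rwa [Matrix.det_transpose]))
      have := hinj (a₁ := w) (a₂ := 0) (by rw [hMw, Matrix.mulVec_zero])
      exact this
    have hv2zero : v.2 = 0 := by
      funext f
      by_cases hf : f ∈ Y
      · exact congrFun hw ⟨f, hf⟩
      · exact hv2.2 f hf
    have hv1zero : v.1 = 0 := by
      funext f
      rw [hv1 f]
      simp [hv2zero]
    exact Prod.ext hv1zero hv2zero

lemma zmod2_isUnit_iff (x : ZMod 2) : IsUnit x ↔ x = 1 := by
  rw [isUnit_iff_ne_zero]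
  revert x; decide

lemma phi_singleton (A : Matrix E E (ZMod 2)) (e : E) :
    ({e} : Finset E) ∈ Phi A ↔ A e e = 1 := by
  set σ : Fin 1 ≃ ↥({e} : Finset E) :=
    { toFun := fun _ => ⟨e, Finset.mem_singleton_self e⟩
      invFun := fun _ => 0
      left_inv := fun i => by fin_cases i; rfl
      right_inv := fun x => Subtype.ext (Finset.mem_singleton.1 x.2).symm } with hσ
  have hdet : (A.submatrix (fun i : ↥({e} : Finset E) => (i : E))
      (fun j : ↥({e} : Finset E) => (j : E))).det = A e e := by
    rw [← Matrix.det_submatrix_equiv_self σ, Matrix.submatrix_submatrix,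
      Matrix.det_fin_one]
    rfl
  rw [Phi, Set.mem_setOf_eq, hdet, zmod2_isUnit_iff]

lemma phi_pair (A : Matrix E E (ZMod 2)) {e f : E} (he : e ≠ f) :
    ({e, f} : Finset E) ∈ Phi A ↔
      A e e * A f f - A e f * A f e = 1 := by
  have hef : e ∈ ({e, f} : Finset E) := by simp
  have hff : f ∈ ({e, f} : Finset E) := by simp
  set σ : Fin 2 ≃ ↥({e, f} : Finset E) :=
    { toFun := ![⟨e, hef⟩, ⟨f, hff⟩]
      invFun := fun x => if (x : E) = e then 0 else 1
      left_inv := by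
        intro i
        fin_cases i
        · simp
        · simp [he.symm]
      right_inv := by
        rintro ⟨x, hx⟩
        rcases Finset.mem_insert.1 hx with rfl | hx
        · simp
        · rw [Finset.mem_singleton] at hx
          subst hx
          simp [he.symm] } with hσ
  have hdet : (A.submatrix (fun i : ↥({e, f} : Finset E) => (i : E))
      (fun j : ↥({e, f} : Finset E) => (j : E))).det
      = A e e * A f f - A e f * A f e := by
    rw [← Matrix.det_submatrix_equiv_self σ, Matrix.submatrix_submatrix]
    rw [Matrix.det_fin_two]
    simp [hσ, Matrix.submatrix_apply]
  rw [Phi, Set.mem_setOf_eq, hdet, zmod2_isUnit_iff]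

lemma phi_inj {A B : Matrix E E (ZMod 2)} (hA : A.IsSymm) (hB : B.IsSymm)
    (h : Phi A = Phi B) : A = B := by
  have hAB : ∀ U : Finset E, U ∈ Phi A ↔ U ∈ Phi B := fun U => by rw [h]
  have hdiag : ∀ e, A e e = B e e := by
    intro e
    have h2 : (A e e = 1) ↔ (B e e = 1) :=
      (phi_singleton A e).symm.trans ((hAB _).trans (phi_singleton B e))
    revert h2
    generalize A e e = x; generalize B e e = y
    revert x y; decide
  ext e f
  rcases eq_or_ne e f with rfl | hef
  · exact hdiag e
  · have h1 : (A e e * A f f - A e f * A f e = 1) ↔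
        (B e e * B f f - B e f * B f e = 1) :=
      (phi_pair A hef).symm.trans ((hAB _).trans (phi_pair B hef))
    rw [hA.apply e f, hB.apply e f, hdiag e, hdiag f] at h1
    revert h1
    generalize B e e = a; generalize B f f = b
    generalize A e f = x; generalize B e f = y
    revert a b x y; decide

end Helpers

/-- `ν_E` restricts to a bijection between graphic Lagrangian subspaces of
`V_E` and nondegeneracy set systems of symmetric matrices over `𝔽₂`: every graphic
Lagrangian `L` satisfies `ν_E(L) = Φ(A)` for a unique symmetric `A`, and every `Φ(A)`
arises from a unique graphic Lagrangian subspace. -/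
theorem stmt5 :
    (∀ L : Submodule (ZMod 2) (V E), IsLagrangian L → IsGraphic L →
      ∃! A : Matrix E E (ZMod 2), A.IsSymm ∧ nu L = Phi A) ∧
    (∀ A : Matrix E E (ZMod 2), A.IsSymm →
      ∃! L : Submodule (ZMod 2) (V E), (IsLagrangian L ∧ IsGraphic L) ∧ nu L = Phi A) := by
  constructor
  · intro L hL hG
    obtain ⟨A, hAs, rfl⟩ := exists_graphOf hL hG
    refine ⟨A, ⟨hAs, nu_graphOf A⟩, ?_⟩
    rintro B ⟨hBs, hB⟩
    exact phi_inj hBs hAs (by rw [← hB, nu_graphOf])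
  · intro A hAs
    refine ⟨graphOf A, ⟨⟨graphOf_isLagrangian hAs, graphOf_isGraphic A⟩, nu_graphOf A⟩, ?_⟩
    rintro L ⟨⟨hl, hg⟩, hnu⟩
    obtain ⟨B, hBs, rfl⟩ := exists_graphOf hl hg
    rw [phi_inj hBs hAs (by rw [← hnu, nu_graphOf])]
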